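/- arXiv:2408.04264 — 3 statements merged into one kernel-verified Lean document; each statement's English description precedes it below -/
import Mathlib

section
/- If G is a maximal outer k-planar graph with at least three vertices, then in every outer k-planar drawing of G, any two vertices that are consecutive in the cyclic order along the circle are adjacent in G; hence the outer face is bounded by a simple cycle through all vertices. -/
open Classical Real

/-- `x` lies strictly between `a` and `b` in the linear order on `ℝ`
(interpreted as positions along a cut-open circle). -/
def ArcBtw (x a b : ℝ) : Prop := min a b < x ∧ x < max a b

/-- The pairs `{a,b}` and `{c,d}` of positions on the circle are intertwined:
exactly one of `c`, `d` lies on the arc strictly between `a` and `b`. -/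
def Intertwined (a b c d : ℝ) : Prop := Xor' (ArcBtw c a b) (ArcBtw d a b)

/-- The vertex pairs `{a,b}` and `{c,d}` span four distinct vertices and are
intertwined in the cyclic order given by `pos`; equivalently, the corresponding
chords cross in the convex drawing. -/
def CrossPairs {V : Type*} (pos : V → ℝ) (a b c d : V) : Prop :=
  a ≠ c ∧ a ≠ d ∧ b ≠ c ∧ b ≠ d ∧ Intertwined (pos a) (pos b) (pos c) (pos d)

/-- The unordered pair `e` pierces (crosses) the chord `{a,b}`. -/
def Pierces {V : Type*} (pos : V → ℝ) (e : Sym2 V) (a b : V) : Prop :=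
  ∃ c d, e = s(c, d) ∧ CrossPairs pos a b c d

/-- Number of edges of `G` that cross the chord `{a,b}` in the convex drawing `pos`. -/
noncomputable def crossNum {V : Type*} (G : SimpleGraph V) (pos : V → ℝ) (a b : V) : ℕ :=
  {e ∈ G.edgeSet | Pierces pos e a b}.ncard

/-- `pos` is an outer `k`-planar drawing of `G`: a convex drawing (injective
placement on the circle) where every edge is crossed by at most `k` other edges. -/
def IsOuterkPlanarDrawing {V : Type*} (G : SimpleGraph V) (k : ℕ) (pos : V → ℝ) : Prop :=
  Function.Injective pos ∧ ∀ a b, G.Adj a b → crossNum G pos a b ≤ k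

/-- `G` is outer `k`-planar. -/
def IsOuterkPlanar {V : Type*} (G : SimpleGraph V) (k : ℕ) : Prop :=
  ∃ pos : V → ℝ, IsOuterkPlanarDrawing G k pos

/-- `a` and `b` are consecutive in the cyclic order given by `pos`:
one of the two open arcs between them contains no vertex. -/
def ConsecutiveAt {V : Type*} (pos : V → ℝ) (a b : V) : Prop :=
  a ≠ b ∧ ((∀ x, x ≠ a → x ≠ b → ArcBtw (pos x) (pos a) (pos b)) ∨
           (∀ x, x ≠ a → x ≠ b → ¬ ArcBtw (pos x) (pos a) (pos b)))

/-- The unordered pairs `e` and `f` cross in the convex drawing `pos`. -/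
def SymCross {V : Type*} (pos : V → ℝ) (e f : Sym2 V) : Prop :=
  ∃ a b c d, e = s(a, b) ∧ f = s(c, d) ∧ CrossPairs pos a b c d

/-- A triangulation of the convex polygon whose vertices are placed by `pos`:
a maximal set of pairwise non-crossing inner diagonals. Together with the
polygon sides (pairs of consecutive vertices) these are the links of the
triangulation. -/
structure PolyTriangulation {V : Type*} (pos : V → ℝ) where
  diags : Set (Sym2 V)
  diag_proper : ∀ e ∈ diags, ∀ a b : V, e = s(a, b) → a ≠ b ∧ ¬ ConsecutiveAt pos a b
  noncross : ∀ e ∈ diags, ∀ f ∈ diags, ¬ SymCross pos e f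
  maximal : ∀ a b : V, a ≠ b → ¬ ConsecutiveAt pos a b → s(a, b) ∉ diags →
      ∃ e ∈ diags, SymCross pos e s(a, b)

/-- `{a,b}` is a link of the triangulation `T`: a polygon side or a diagonal. -/
def PolyTriangulation.IsLink {V : Type*} {pos : V → ℝ} (T : PolyTriangulation pos)
    (a b : V) : Prop :=
  ConsecutiveAt pos a b ∨ s(a, b) ∈ T.diags

/-- `u`, `v`, `w` form a triangle (face) of the triangulation `T`. -/
def PolyTriangulation.IsTriangle {V : Type*} {pos : V → ℝ} (T : PolyTriangulation pos)
    (u v w : V) : Prop :=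
  u ≠ v ∧ v ≠ w ∧ u ≠ w ∧ T.IsLink u v ∧ T.IsLink v w ∧ T.IsLink u w

/-- `G` is a maximal outer `k`-planar graph: it is outer `k`-planar and adding
any non-edge destroys outer `k`-planarity. -/
def IsMaximalOuterkPlanar {V : Type*} (G : SimpleGraph V) (k : ℕ) : Prop :=
  IsOuterkPlanar G k ∧
    ∀ a b : V, a ≠ b → ¬ G.Adj a b →
      ¬ IsOuterkPlanar (G ⊔ SimpleGraph.fromEdgeSet {s(a, b)}) k

/- Auxiliary lemmas -/

lemma arcBtw_lt {x u v : ℝ} (h : u < v) : ArcBtw x u v ↔ u < x ∧ x < v := by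
  unfold ArcBtw; rw [min_eq_left h.le, max_eq_right h.le]

lemma arcBtw_gt {x u v : ℝ} (h : v < u) : ArcBtw x u v ↔ v < x ∧ x < u := by
  unfold ArcBtw; rw [min_eq_right h.le, max_eq_left h.le]

lemma arcBtw_comm {x u v : ℝ} : ArcBtw x u v ↔ ArcBtw x v u := by
  unfold ArcBtw; rw [min_comm, max_comm]

lemma xor_cross {a b c d : ℝ} (hab : a < b) (hcd : c < d) (hac : a ≠ c) (had : a ≠ d)
    (hbc : b ≠ c) (hbd : b ≠ d)
    (h : Xor' (a < c ∧ c < b) (a < d ∧ d < b)) :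
    Xor' (c < a ∧ a < d) (c < b ∧ b < d) := by
  rcases h with ⟨⟨h1, h2⟩, h3⟩ | ⟨⟨h1, h2⟩, h3⟩
  · right
    refine ⟨⟨by linarith, ?_⟩, fun hh => by linarith [hh.1]⟩
    rcases lt_or_ge d b with h4 | h4
    · exact absurd ⟨by linarith, h4⟩ h3
    · exact lt_of_le_of_ne h4 hbd
  · left
    refine ⟨⟨?_, h1⟩, fun hh => by linarith [hh.2]⟩
    rcases lt_or_ge a c with h4 | h4
    · exact absurd ⟨h4, by linarith⟩ h3
    · exact lt_of_le_of_ne h4 (Ne.symm hac)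

lemma intertwined_symm {a b c d : ℝ} (hab : a ≠ b) (hcd : c ≠ d) (hac : a ≠ c)
    (had : a ≠ d) (hbc : b ≠ c) (hbd : b ≠ d)
    (h : Intertwined a b c d) : Intertwined c d a b := by
  unfold Intertwined at h ⊢
  rcases hab.lt_or_gt with h1 | h1 <;> rcases hcd.lt_or_gt with h2 | h2
  · rw [arcBtw_lt h1, arcBtw_lt h1] at h
    rw [arcBtw_lt h2, arcBtw_lt h2]
    exact xor_cross h1 h2 hac had hbc hbd h
  · rw [arcBtw_lt h1, arcBtw_lt h1] at h
    rw [arcBtw_gt h2, arcBtw_gt h2]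
    exact xor_cross h1 h2 had hac hbd hbc h.symm
  · rw [arcBtw_gt h1, arcBtw_gt h1] at h
    rw [arcBtw_lt h2, arcBtw_lt h2]
    exact (xor_cross h1 h2 hbc hbd hac had h).symm
  · rw [arcBtw_gt h1, arcBtw_gt h1] at h
    rw [arcBtw_gt h2, arcBtw_gt h2]
    exact (xor_cross h1 h2 hbd hbc had hac h.symm).symm

lemma consec_symm {V : Type*} {pos : V → ℝ} {a b : V} (h : ConsecutiveAt pos a b) :
    ConsecutiveAt pos b a := by
  refine ⟨h.1.symm, ?_⟩
  rcases h.2 with hall | hnone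
  · left; intro x hx1 hx2; exact arcBtw_comm.mpr (hall x hx2 hx1)
  · right; intro x hx1 hx2 hx3; exact hnone x hx2 hx1 (arcBtw_comm.mpr hx3)

/-- Nothing pierces the chord between two consecutive vertices. -/
lemma not_pierces_of_consec {V : Type*} {pos : V → ℝ} {a b : V}
    (hcons : ConsecutiveAt pos a b) (e : Sym2 V) : ¬ Pierces pos e a b := by
  rintro ⟨c, d, -, h1, h2, h3, h4, h5⟩
  rcases hcons.2 with hall | hnone
  · rcases h5 with ⟨-, hq⟩ | ⟨-, hp⟩
    · exact hq (hall d (Ne.symm h2) (Ne.symm h4))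
    · exact hp (hall c (Ne.symm h1) (Ne.symm h3))
  · rcases h5 with ⟨hp, -⟩ | ⟨hq, -⟩
    · exact hnone c (Ne.symm h1) (Ne.symm h3) hp
    · exact hnone d (Ne.symm h2) (Ne.symm h4) hq

/-- The chord between two consecutive vertices pierces no other chord. -/
lemma consec_not_pierces {V : Type*} {pos : V → ℝ} (hinj : Function.Injective pos)
    {a b : V} (hcons : ConsecutiveAt pos a b) {c d : V} (hcd : c ≠ d) :
    ¬ Pierces pos s(a, b) c d := by
  rintro ⟨c', d', he, hcp⟩
  rw [Sym2.eq_iff] at he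
  have key : Intertwined (pos c) (pos d) (pos a) (pos b) := by
    rcases he with ⟨rfl, rfl⟩ | ⟨rfl, rfl⟩
    · exact hcp.2.2.2.2
    · exact hcp.2.2.2.2.symm
  have hca : c ≠ a := by rcases he with ⟨rfl, rfl⟩ | ⟨rfl, rfl⟩
                         exacts [hcp.1, hcp.2.1]
  have hcb : c ≠ b := by rcases he with ⟨rfl, rfl⟩ | ⟨rfl, rfl⟩
                         exacts [hcp.2.1, hcp.1]
  have hda : d ≠ a := by rcases he with ⟨rfl, rfl⟩ | ⟨rfl, rfl⟩
                         exacts [hcp.2.2.1, hcp.2.2.2.1]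
  have hdb : d ≠ b := by rcases he with ⟨rfl, rfl⟩ | ⟨rfl, rfl⟩
                         exacts [hcp.2.2.2.1, hcp.2.2.1]
  have hint : Intertwined (pos a) (pos b) (pos c) (pos d) :=
    intertwined_symm (hinj.ne hcd) (hinj.ne hcons.1) (hinj.ne hca) (hinj.ne hcb)
      (hinj.ne hda) (hinj.ne hdb) key
  exact not_pierces_of_consec hcons s(c, d)
    ⟨c, d, rfl, hca.symm, hda.symm, hcb.symm, hdb.symm, hint⟩

/-- If `G` is a maximal outer `k`-planar graph with at least three vertices,
then in every outer `k`-planar drawing of `G`, any two vertices that are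
consecutive in the cyclic order are adjacent in `G`; hence the outer face is
bounded by a simple cycle through all vertices. -/
theorem maximal_outerkPlanar_consecutive_adjacent {V : Type*} [Fintype V]
    (G : SimpleGraph V) (k : ℕ) (hV : 3 ≤ Fintype.card V)
    (hmax : IsMaximalOuterkPlanar G k)
    (pos : V → ℝ) (hdraw : IsOuterkPlanarDrawing G k pos) :
    ∀ a b : V, ConsecutiveAt pos a b → G.Adj a b := by
  intro a b hcons
  by_contra hadj
  refine hmax.2 a b hcons.1 hadj ⟨pos, hdraw.1, ?_⟩
  intro c d hcd'
  set G' := G ⊔ SimpleGraph.fromEdgeSet {s(a, b)} with hG'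
  have hE : G'.edgeSet = G.edgeSet ∪ {s(a, b)} := by
    rw [hG', SimpleGraph.edgeSet_sup, SimpleGraph.edgeSet_fromEdgeSet]
    congr 1
    ext e
    simp only [Set.mem_diff, Set.mem_singleton_iff, Set.mem_setOf_eq, and_iff_left_iff_imp]
    rintro rfl h
    exact hcons.1 (Sym2.mk_isDiag_iff.mp h)
  by_cases hG : G.Adj c d
  · have hset : {e ∈ G'.edgeSet | Pierces pos e c d} = {e ∈ G.edgeSet | Pierces pos e c d} := by
      ext e
      simp only [Set.mem_setOf_eq, hE, Set.mem_union, Set.mem_singleton_iff]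
      constructor
      · rintro ⟨he | rfl, hp⟩
        · exact ⟨he, hp⟩
        · exact absurd hp (consec_not_pierces hdraw.1 hcons hcd'.ne)
      · rintro ⟨he, hp⟩
        exact ⟨Or.inl he, hp⟩
    unfold crossNum
    rw [hset]
    exact hdraw.2 c d hG
  · have hsym : s(c, d) = s(a, b) := by
      have := hcd'
      rw [hG', SimpleGraph.sup_adj] at this
      rcases this with h | h
      · exact absurd h hG
      · rw [SimpleGraph.fromEdgeSet_adj] at h
        exact h.1
    have hconscd : ConsecutiveAt pos c d := by
      rw [Sym2.eq_iff] at hsym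
      rcases hsym with ⟨rfl, rfl⟩ | ⟨rfl, rfl⟩
      · exact hcons
      · exact consec_symm hcons
    have hset : {e ∈ G'.edgeSet | Pierces pos e c d} = ∅ := by
      ext e
      simp only [Set.mem_setOf_eq, Set.mem_empty_iff_false, iff_false, not_and]
      intro _
      exact not_pierces_of_consec hconscd e
    unfold crossNum
    rw [hset]
    simp
end

section
/- If G is a graph whose vertices lie on a circle (convex drawing) and the outer cycle admits a triangulation T (of the convex polygon on the vertices) such that every diagonal of T is intertwined with at most c edges of G, then G has a balanced separation of order at most c + 2, i.e., a separation (A,B) with |A ∩ B| ≤ c + 2 and |A \ B|, |B \ A| ≤ 2|V(G)|/3. -/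
open Classical Real

section Basics

lemma arcBtw_comm_s8 {x a b : ℝ} : ArcBtw x a b ↔ ArcBtw x b a := by
  simp [ArcBtw, min_comm, max_comm]

lemma arcBtw_iff {a b x : ℝ} (h : a < b) : ArcBtw x a b ↔ a < x ∧ x < b := by
  simp [ArcBtw, min_eq_left h.le, max_eq_right h.le]

lemma arcBtw_or {x a b : ℝ} : ArcBtw x a b ↔ (a < x ∧ x < b) ∨ (b < x ∧ x < a) := by
  rcases lt_trichotomy a b with h | h | h
  · rw [arcBtw_iff h]; constructor
    · exact Or.inl
    · rintro (h1 | ⟨h1, h2⟩); · exact h1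
      · exact absurd (h1.trans h2) (lt_asymm h)
  · subst h; constructor
    · rintro ⟨h1, h2⟩; simp at h1 h2; exact Or.inl ⟨h1, h2⟩
    · rintro (⟨h1, h2⟩ | ⟨h1, h2⟩) <;> exact ⟨by simpa using h1, by simpa using h2⟩
  · rw [arcBtw_comm_s8, arcBtw_iff h]; constructor
    · exact Or.inr
    · rintro (⟨h1, h2⟩ | h1); · exact absurd (h1.trans h2) (lt_asymm h)
      · exact h1

lemma not_arcBtw_left {a b : ℝ} : ¬ ArcBtw a a b := by
  rw [arcBtw_or]; rintro (⟨h1, h2⟩ | ⟨h1, h2⟩) <;> linarith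

lemma not_arcBtw_right {a b : ℝ} : ¬ ArcBtw b a b := by
  rw [arcBtw_or]; rintro (⟨h1, h2⟩ | ⟨h1, h2⟩) <;> linarith

lemma arcBtw_ne_left {x a b : ℝ} (h : ArcBtw x a b) : x ≠ a := by
  rintro rfl; exact not_arcBtw_left h

lemma arcBtw_ne_right {x a b : ℝ} (h : ArcBtw x a b) : x ≠ b := by
  rintro rfl; exact not_arcBtw_right h

end Basics

section Swap

lemma intertwined_comm₁ {a b c d : ℝ} : Intertwined a b c d ↔ Intertwined b a c d := by
  unfold Intertwined; rw [@arcBtw_comm_s8 c, @arcBtw_comm_s8 d]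

lemma intertwined_comm₂ {a b c d : ℝ} : Intertwined a b c d ↔ Intertwined a b d c := by
  unfold Intertwined; exact iff_of_eq (xor_comm _ _)

lemma intertwined_swap_core {a b c d : ℝ} (hab : a < b) (hcd : c < d)
    (hac : a ≠ c) (had : a ≠ d) (hbc : b ≠ c) (hbd : b ≠ d)
    (h : Intertwined a b c d) : Intertwined c d a b := by
  unfold Intertwined at h ⊢
  rw [arcBtw_iff hab, arcBtw_iff hab] at h
  rw [arcBtw_iff hcd, arcBtw_iff hcd]
  rcases h with ⟨⟨h1, h2⟩, h3⟩ | ⟨⟨h1, h2⟩, h3⟩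
  · push_neg at h3
    have hdb : b < d := (h3 (h1.trans hcd)).lt_of_ne hbd
    exact Or.inr ⟨⟨h2, hdb⟩, fun hh => absurd hh.1 (lt_asymm h1)⟩
  · push_neg at h3
    have hca : c < a := by
      rcases lt_trichotomy a c with h' | h' | h'
      · have := h3 h'; linarith
      · exact absurd h' hac
      · exact h'
    exact Or.inl ⟨⟨hca, h1⟩, fun hh => absurd hh.2 (lt_asymm h2)⟩

lemma intertwined_ne₁ {a b c d : ℝ} (h : Intertwined a b c d) : a ≠ b := by
  rintro rfl
  rcases h with ⟨⟨h1, h2⟩, _⟩ | ⟨⟨h1, h2⟩, _⟩ <;> simp at h1 h2 <;> linarith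

lemma intertwined_ne₂ {a b c d : ℝ} (h : Intertwined a b c d) : c ≠ d := by
  rintro rfl
  rcases h with ⟨h1, h2⟩ | ⟨h1, h2⟩ <;> exact h2 h1

lemma intertwined_swap {a b c d : ℝ}
    (hac : a ≠ c) (had : a ≠ d) (hbc : b ≠ c) (hbd : b ≠ d)
    (h : Intertwined a b c d) : Intertwined c d a b := by
  have hab := intertwined_ne₁ h
  have hcd := intertwined_ne₂ h
  rcases hab.lt_or_gt with h1 | h1
  · rcases hcd.lt_or_gt with h2 | h2
    · exact intertwined_swap_core h1 h2 hac had hbc hbd h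
    · rw [intertwined_comm₁]
      exact intertwined_swap_core h1 h2 had hac hbd hbc (intertwined_comm₂.mp h)
  · rcases hcd.lt_or_gt with h2 | h2
    · rw [intertwined_comm₂]
      exact intertwined_swap_core h1 h2 hbc hbd hac had (intertwined_comm₁.mp h)
    · rw [intertwined_comm₁, intertwined_comm₂]
      exact intertwined_swap_core h1 h2 hbd hbc had hac
        (intertwined_comm₁.mp (intertwined_comm₂.mp h))
end Swap

namespace BalSep
variable {V : Type*}

/-- The open arc strictly between `a` and `b` (linear side). -/
def ins (pos : V → ℝ) (a b : V) : Set V := {y | ArcBtw (pos y) (pos a) (pos b)}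

/-- The other open arc of the chord `{a,b}`. -/
def outs (pos : V → ℝ) (a b : V) : Set V :=
  {y | y ≠ a ∧ y ≠ b ∧ ¬ ArcBtw (pos y) (pos a) (pos b)}

/-- The side of the chord `{a,b}` not containing `x`. -/
def away (pos : V → ℝ) (a b x : V) : Set V :=
  if ArcBtw (pos x) (pos a) (pos b) then outs pos a b else ins pos a b

/-- The side of the chord `{a,b}` containing `x`. -/
def sideWith (pos : V → ℝ) (a b x : V) : Set V :=
  if ArcBtw (pos x) (pos a) (pos b) then ins pos a b else outs pos a b

variable {pos : V → ℝ}

lemma mem_ins {a b y : V} : y ∈ ins pos a b ↔ ArcBtw (pos y) (pos a) (pos b) := Iff.rfl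

lemma mem_outs {a b y : V} :
    y ∈ outs pos a b ↔ y ≠ a ∧ y ≠ b ∧ ¬ ArcBtw (pos y) (pos a) (pos b) := Iff.rfl

lemma mem_ins_ne₁ {a b y : V} (h : y ∈ ins pos a b) : y ≠ a :=
  fun hy => arcBtw_ne_left h (congrArg pos hy)

lemma mem_ins_ne₂ {a b y : V} (h : y ∈ ins pos a b) : y ≠ b :=
  fun hy => arcBtw_ne_right h (congrArg pos hy)

lemma ins_comm {a b : V} : ins pos a b = ins pos b a :=
  Set.ext fun _ => arcBtw_comm_s8

lemma outs_comm {a b : V} : outs pos a b = outs pos b a := by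
  ext y; rw [mem_outs, mem_outs, (arcBtw_comm_s8 (a := pos a) (b := pos b)).not]; tauto

lemma not_mem_ins_left {a b : V} : a ∉ ins pos a b := fun h => mem_ins_ne₁ h rfl
lemma not_mem_ins_right {a b : V} : b ∉ ins pos a b := fun h => mem_ins_ne₂ h rfl
lemma not_mem_outs_left {a b : V} : a ∉ outs pos a b := fun h => h.1 rfl
lemma not_mem_outs_right {a b : V} : b ∉ outs pos a b := fun h => h.2.1 rfl

lemma ins_disj_outs {a b y : V} (h : y ∈ ins pos a b) : y ∉ outs pos a b :=
  fun h' => h'.2.2 h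

lemma away_comm {a b x : V} : away pos a b x = away pos b a x := by
  rw [away, away, show ArcBtw (pos x) (pos a) (pos b) = ArcBtw (pos x) (pos b) (pos a) from
    propext arcBtw_comm_s8, ins_comm, outs_comm]

lemma away_eq_or {a b x : V} :
    away pos a b x = ins pos a b ∨ away pos a b x = outs pos a b := by
  rw [away]; split_ifs <;> simp

lemma not_mem_away_left {a b x : V} : a ∉ away pos a b x := by
  rw [away]; split_ifs
  · exact not_mem_outs_left
  · exact not_mem_ins_left

lemma not_mem_away_right {a b x : V} : b ∉ away pos a b x := by
  rw [away]; split_ifs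
  · exact not_mem_outs_right
  · exact not_mem_ins_right

lemma not_mem_away_self {a b x : V} : x ∉ away pos a b x := by
  rw [away]; split_ifs with h
  · exact fun h' => h'.2.2 h
  · exact fun h' => h h'

lemma mem_away_ne₁ {a b x y : V} (h : y ∈ away pos a b x) : y ≠ a :=
  fun hy => not_mem_away_left (hy ▸ h)

lemma mem_away_ne₂ {a b x y : V} (h : y ∈ away pos a b x) : y ≠ b :=
  fun hy => not_mem_away_right (hy ▸ h)

lemma mem_away_ne₃ {a b x y : V} (h : y ∈ away pos a b x) : y ≠ x :=
  fun hy => not_mem_away_self (hy ▸ h)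

lemma not_mem_sideWith_left {a b x : V} : a ∉ sideWith pos a b x := by
  rw [sideWith]; split_ifs
  · exact not_mem_ins_left
  · exact not_mem_outs_left

lemma not_mem_sideWith_right {a b x : V} : b ∉ sideWith pos a b x := by
  rw [sideWith]; split_ifs
  · exact not_mem_ins_right
  · exact not_mem_outs_right

lemma mem_sideWith_self {a b x : V} (hxa : x ≠ a) (hxb : x ≠ b) :
    x ∈ sideWith pos a b x := by
  rw [sideWith]; split_ifs with h
  · exact h
  · exact ⟨hxa, hxb, h⟩

lemma sideWith_eq_or {a b x : V} :
    sideWith pos a b x = ins pos a b ∨ sideWith pos a b x = outs pos a b := by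
  rw [sideWith]; split_ifs <;> simp

lemma away_disj_sideWith {a b x y : V} (h : y ∈ away pos a b x) :
    y ∉ sideWith pos a b x := by
  rw [away] at h; rw [sideWith]; split_ifs at h ⊢ with hc
  · exact fun h' => h.2.2 h'
  · exact fun h' => h'.2.2 h

lemma mem_away_or_sideWith {a b x y : V} (hya : y ≠ a) (hyb : y ≠ b) :
    y ∈ away pos a b x ∨ y ∈ sideWith pos a b x := by
  rw [away, sideWith]; split_ifs with hc
  · by_cases h : ArcBtw (pos y) (pos a) (pos b)
    · exact Or.inr h
    · exact Or.inl ⟨hya, hyb, h⟩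
  · by_cases h : ArcBtw (pos y) (pos a) (pos b)
    · exact Or.inl h
    · exact Or.inr ⟨hya, hyb, h⟩

lemma opposite_sides {a b x y z : V} (hy : y ∈ away pos a b x) (hz : z ∈ sideWith pos a b x) :
    (y ∈ ins pos a b ∧ z ∈ outs pos a b) ∨ (z ∈ ins pos a b ∧ y ∈ outs pos a b) := by
  rw [away] at hy; rw [sideWith] at hz; split_ifs at hy hz
  · exact Or.inr ⟨hz, hy⟩
  · exact Or.inl ⟨hy, hz⟩

/-- membership in `away` via a side-comparison formula. -/
lemma mem_away_iff {a b x y : V} (hya : y ≠ a) (hyb : y ≠ b) :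
    y ∈ away pos a b x ↔
      (ArcBtw (pos y) (pos a) (pos b) ↔ ¬ ArcBtw (pos x) (pos a) (pos b)) := by
  rw [away]; split_ifs with hc
  · rw [mem_outs]; simp [hya, hyb, hc]
  · rw [mem_ins]; simp [hc]

/- mirror (negation) invariance -/
lemma ins_neg {a b : V} : ins (fun v => -(pos v)) a b = ins pos a b := by
  ext y; rw [mem_ins, mem_ins, arcBtw_or, arcBtw_or]
  constructor
  · rintro (⟨h1, h2⟩ | ⟨h1, h2⟩)
    · exact Or.inr ⟨by linarith, by linarith⟩
    · exact Or.inl ⟨by linarith, by linarith⟩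
  · rintro (⟨h1, h2⟩ | ⟨h1, h2⟩)
    · exact Or.inr ⟨by linarith, by linarith⟩
    · exact Or.inl ⟨by linarith, by linarith⟩

lemma outs_neg {a b : V} : outs (fun v => -(pos v)) a b = outs pos a b := by
  ext y
  rw [mem_outs, mem_outs]
  have : y ∈ ins (fun v => -(pos v)) a b ↔ y ∈ ins pos a b := by rw [ins_neg]
  rw [mem_ins, mem_ins] at this
  tauto

lemma away_neg {a b x : V} : away (fun v => -(pos v)) a b x = away pos a b x := by
  have hx : ArcBtw (-(pos x)) (-(pos a)) (-(pos b)) = ArcBtw (pos x) (pos a) (pos b) := by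
    have : x ∈ ins (fun v => -(pos v)) a b ↔ x ∈ ins pos a b := by rw [ins_neg]
    rw [mem_ins, mem_ins] at this
    exact propext this
  rw [away, away]
  simp only [hx, ins_neg, outs_neg]


lemma pne' {a b : V} (hinj : Function.Injective pos) (h : a ≠ b) : pos a ≠ pos b :=
  fun hh => h (hinj hh)

lemma away_eq_ins (a b x : V) (h : ¬ ArcBtw (pos x) (pos a) (pos b)) :
    away pos a b x = ins pos a b := if_neg h

lemma away_eq_outs (a b x : V) (h : ArcBtw (pos x) (pos a) (pos b)) :
    away pos a b x = outs pos a b := if_pos h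

section Bash
variable (hinj : Function.Injective pos)
include hinj

lemma three_arcs_sorted {a x b y : V} (h1 : pos a < pos x) (h2 : pos x < pos b)
    (hya : y ≠ a) (hyb : y ≠ b) (hyx : y ≠ x) :
    (y ∈ away pos a x b ∧ y ∉ away pos x b a ∧ y ∉ away pos a b x) ∨
    (y ∉ away pos a x b ∧ y ∈ away pos x b a ∧ y ∉ away pos a b x) ∨
    (y ∉ away pos a x b ∧ y ∉ away pos x b a ∧ y ∈ away pos a b x) := by
  have e1 : away pos a x b = ins pos a x := by
    apply away_eq_ins; rw [arcBtw_or]; rintro (⟨_, _⟩ | ⟨_, _⟩) <;> linarith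
  have e2 : away pos x b a = ins pos x b := by
    apply away_eq_ins; rw [arcBtw_or]; rintro (⟨_, _⟩ | ⟨_, _⟩) <;> linarith
  have e3 : away pos a b x = outs pos a b := by
    apply away_eq_outs; rw [arcBtw_or]; exact Or.inl ⟨h1, h2⟩
  have hya' := pne' hinj hya
  have hyb' := pne' hinj hyb
  have hyx' := pne' hinj hyx
  rw [e1, e2, e3]
  simp only [mem_ins, mem_outs, arcBtw_iff h1, arcBtw_iff h2, arcBtw_iff (h1.trans h2)]
  rcases lt_trichotomy (pos y) (pos x) with h | h | h
  · rcases hya'.lt_or_gt with h' | h'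
    · refine Or.inr (Or.inr ⟨?_, ?_, hya, hyb, ?_⟩)
      · rintro ⟨c, _⟩; linarith
      · rintro ⟨c, _⟩; linarith
      · rintro ⟨c, _⟩; linarith
    · refine Or.inl ⟨⟨h', h⟩, ?_, ?_⟩
      · rintro ⟨c, _⟩; linarith
      · rintro ⟨_, _, c⟩; exact c ⟨h', by linarith⟩
  · exact absurd h hyx'
  · rcases hyb'.lt_or_gt with h' | h'
    · refine Or.inr (Or.inl ⟨?_, ⟨h, h'⟩, ?_⟩)
      · rintro ⟨_, c⟩; linarith
      · rintro ⟨_, _, c⟩; exact c ⟨by linarith, h'⟩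
    · refine Or.inr (Or.inr ⟨?_, ?_, hya, hyb, ?_⟩)
      · rintro ⟨_, c⟩; linarith
      · rintro ⟨_, c⟩; linarith
      · rintro ⟨_, c⟩; linarith

lemma three_arcs {a x b y : V} (hax : a ≠ x) (hab : a ≠ b) (hxb : x ≠ b)
    (hya : y ≠ a) (hyb : y ≠ b) (hyx : y ≠ x) :
    (y ∈ away pos a x b ∧ y ∉ away pos x b a ∧ y ∉ away pos a b x) ∨
    (y ∉ away pos a x b ∧ y ∈ away pos x b a ∧ y ∉ away pos a b x) ∨
    (y ∉ away pos a x b ∧ y ∉ away pos x b a ∧ y ∈ away pos a b x) := by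
  have hax' := pne' hinj hax
  have hab' := pne' hinj hab
  have hxb' := pne' hinj hxb
  rcases hax'.lt_or_gt with h1 | h1 <;> rcases hab'.lt_or_gt with h2 | h2 <;>
    rcases hxb'.lt_or_gt with h3 | h3
  -- α<ξ, α<β, ξ<β : sorted a x b
  · exact three_arcs_sorted hinj h1 h3 hya hyb hyx
  -- α<ξ, α<β, β<ξ : a b x
  · have H := three_arcs_sorted hinj h2 h3 hya hyx hyb
    rw [show away pos b x a = away pos x b a from away_comm] at H
    tauto
  -- α<ξ, β<α : so β<α<ξ : b a x
  · have H := three_arcs_sorted hinj h2 h1 hyb hyx hya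
    rw [show away pos b a x = away pos a b x from away_comm,
        show away pos b x a = away pos x b a from away_comm] at H
    tauto
  · have H := three_arcs_sorted hinj h2 h1 hyb hyx hya
    rw [show away pos b a x = away pos a b x from away_comm,
        show away pos b x a = away pos x b a from away_comm] at H
    tauto
  -- ξ<α, α<β : x a b
  · have H := three_arcs_sorted hinj h1 h2 hyx hyb hya
    rw [show away pos x a b = away pos a x b from away_comm] at H
    tauto
  -- ξ<α, α<β, β<ξ : impossible? ξ<α<β and β<ξ: contradiction
  · exact absurd (h1.trans h2) (lt_asymm h3)
  -- ξ<α, β<α, ξ<β : x b a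
  · have H := three_arcs_sorted hinj h3 h2 hyx hya hyb
    rw [show away pos x b a = away pos x b a from rfl,
        show away pos b a x = away pos a b x from away_comm,
        show away pos x a b = away pos a x b from away_comm] at H
    tauto
  -- ξ<α, β<α, β<ξ : b x a
  · have H := three_arcs_sorted hinj h3 h1 hyb hya hyx
    rw [show away pos b x a = away pos x b a from away_comm,
        show away pos x a b = away pos a x b from away_comm,
        show away pos b a x = away pos a b x from away_comm] at H
    tauto

end Bash

section Bash2
variable (hinj : Function.Injective pos)
include hinj

/-- T5 core: covering three of the six orderings of a, x, b. -/
lemma away_sub_away_core {a x b y : V} (hab : a ≠ b) (hxb : x ≠ b)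
    (hcase : (pos a < pos x ∧ pos x < pos b) ∨ (pos a < pos b ∧ pos b < pos x) ∨
             (pos x < pos a ∧ pos a < pos b))
    (hy : y ∈ away pos a x b) : away pos a y b ⊆ away pos a x b := by
  have hya := mem_away_ne₁ hy
  have hyx := mem_away_ne₂ hy
  have hyb := mem_away_ne₃ hy
  have hya' : pos y ≠ pos a := pne' hinj hya
  have hyx' : pos y ≠ pos x := pne' hinj hyx
  have hyb' : pos y ≠ pos b := pne' hinj hyb
  rcases hcase with ⟨h1, h2⟩ | ⟨h1, h2⟩ | ⟨h1, h2⟩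
  · -- α < ξ < β
    rw [away_eq_ins a x b (by rw [arcBtw_or]; rintro (⟨_, _⟩ | ⟨_, _⟩) <;> linarith)] at hy
    rw [mem_ins, arcBtw_iff h1] at hy
    rw [away_eq_ins a y b (by rw [arcBtw_or]; rintro (⟨_, _⟩ | ⟨_, _⟩) <;> linarith),
        away_eq_ins a x b (by rw [arcBtw_or]; rintro (⟨_, _⟩ | ⟨_, _⟩) <;> linarith)]
    intro z hz
    rw [mem_ins, arcBtw_iff hy.1] at hz
    rw [mem_ins, arcBtw_iff h1]
    exact ⟨hz.1, by linarith [hz.2, hy.2]⟩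
  · -- α < β < ξ
    rw [away_eq_outs a x b (by rw [arcBtw_or]; exact Or.inl ⟨h1, h2⟩)] at hy
    rw [mem_outs, arcBtw_iff (h1.trans h2)] at hy
    rw [away_eq_outs a x b (by rw [arcBtw_or]; exact Or.inl ⟨h1, h2⟩)]
    have hy2 : pos y < pos a ∨ pos x < pos y := by
      rcases lt_trichotomy (pos y) (pos a) with h | h | h
      · exact Or.inl h
      · exact absurd h hya'
      · rcases lt_trichotomy (pos y) (pos x) with h' | h' | h'
        · exact absurd ⟨h, h'⟩ hy.2.2
        · exact absurd h' hyx'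
        · exact Or.inr h'
    rcases hy2 with hcs | hcs
    · rw [away_eq_ins a y b (by rw [arcBtw_or]; rintro (⟨_, _⟩ | ⟨_, _⟩) <;> linarith)]
      intro z hz
      rw [mem_ins, arcBtw_or] at hz
      rcases hz with ⟨_, _⟩ | ⟨hz1, hz2⟩
      · linarith
      · refine mem_outs.mpr ⟨?_, ?_, ?_⟩
        · intro hh; rw [hh] at hz2; linarith
        · intro hh; rw [hh] at hz2; linarith
        · rw [arcBtw_iff (h1.trans h2)]; rintro ⟨c, _⟩; linarith
    · rw [away_eq_outs a y b (by rw [arcBtw_or]; exact Or.inl ⟨h1, by linarith⟩)]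
      intro z hz
      rw [mem_outs, arcBtw_iff (by linarith : pos a < pos y)] at hz
      obtain ⟨hz1, hz2, hz3⟩ := hz
      have hz1' : pos z ≠ pos a := pne' hinj hz1
      have hz2' : pos z ≠ pos y := pne' hinj hz2
      have : pos z < pos a ∨ pos y < pos z := by
        rcases lt_trichotomy (pos z) (pos a) with h | h | h
        · exact Or.inl h
        · exact absurd h hz1'
        · rcases lt_trichotomy (pos z) (pos y) with h' | h' | h'
          · exact absurd ⟨h, h'⟩ hz3
          · exact absurd h' hz2'
          · exact Or.inr h'
      refine mem_outs.mpr ⟨hz1, ?_, ?_⟩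
      · intro hh; rw [hh] at this; rcases this with h | h <;> linarith
      · rw [arcBtw_iff (h1.trans h2)]; rintro ⟨c1, c2⟩; rcases this with h | h <;> linarith
  · -- ξ < α < β
    rw [away_eq_ins a x b (by rw [arcBtw_or]; rintro (⟨_, _⟩ | ⟨_, _⟩) <;> linarith)] at hy
    rw [mem_ins, arcBtw_or] at hy
    rcases hy with ⟨_, _⟩ | ⟨hy1, hy2⟩
    · linarith
    · rw [away_eq_ins a y b (by rw [arcBtw_or]; rintro (⟨_, _⟩ | ⟨_, _⟩) <;> linarith),
          away_eq_ins a x b (by rw [arcBtw_or]; rintro (⟨_, _⟩ | ⟨_, _⟩) <;> linarith)]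
      intro z hz
      rw [mem_ins, arcBtw_or] at hz
      rw [mem_ins, arcBtw_or]
      rcases hz with ⟨_, _⟩ | ⟨hz1, hz2⟩
      · linarith
      · exact Or.inr ⟨by linarith, hz2⟩

/-- T5: if `y` is on the side of the chord `(a,x)` away from `b`, the side of
`(a,y)` away from `b` is contained in it. -/
lemma away_sub_away {a x b y : V} (hab : a ≠ b) (hxb : x ≠ b) (hax : a ≠ x)
    (hy : y ∈ away pos a x b) : away pos a y b ⊆ away pos a x b := by
  have hax' := pne' hinj hax
  have hab' := pne' hinj hab
  have hxb' := pne' hinj hxb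
  rcases hax'.lt_or_gt with h1 | h1 <;> rcases hab'.lt_or_gt with h2 | h2 <;>
    rcases hxb'.lt_or_gt with h3 | h3
  · exact away_sub_away_core hinj hab hxb (Or.inl ⟨h1, h3⟩) hy
  · exact away_sub_away_core hinj hab hxb (Or.inr (Or.inl ⟨h2, h3⟩)) hy
  · exact absurd (h2.trans h1) (lt_asymm h3)
  · -- ξ > α, β < α, β < ξ : mirror of ξ < α < β? -ξ < -α, -α < -β: case 3 for neg
    have hinj' : Function.Injective (fun v => -(pos v)) := fun u v h => by
      simp only [neg_inj] at h; exact hinj h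
    have := away_sub_away_core (pos := fun v => -(pos v)) hinj' hab hxb
      (Or.inr (Or.inr ⟨by simpa using neg_lt_neg h1, by simpa using neg_lt_neg h2⟩))
      (by rw [away_neg]; exact hy)
    rwa [away_neg, away_neg] at this
  · exact away_sub_away_core hinj hab hxb (Or.inr (Or.inr ⟨h1, h2⟩)) hy
  · exact absurd (h1.trans h2) (lt_asymm h3)
  · -- ξ < α, β < α, ξ < β : β < α and ξ < β : mirror of α < β < ξ
    have hinj' : Function.Injective (fun v => -(pos v)) := fun u v h => by
      simp only [neg_inj] at h; exact hinj h
    have := away_sub_away_core (pos := fun v => -(pos v)) hinj' hab hxb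
      (Or.inr (Or.inl ⟨by simpa using neg_lt_neg h2, by simpa using neg_lt_neg h3⟩))
      (by rw [away_neg]; exact hy)
    rwa [away_neg, away_neg] at this
  · -- ξ < α, β < α, β < ξ : mirror of α < ξ < β
    have hinj' : Function.Injective (fun v => -(pos v)) := fun u v h => by
      simp only [neg_inj] at h; exact hinj h
    have := away_sub_away_core (pos := fun v => -(pos v)) hinj' hab hxb
      (Or.inl ⟨by simpa using neg_lt_neg h1, by simpa using neg_lt_neg h3⟩)
      (by rw [away_neg]; exact hy)
    rwa [away_neg, away_neg] at this

end Bash2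

section Bash3
variable (hinj : Function.Injective pos)
include hinj

/-- T6 core. -/
lemma self_mem_away_core {a x b u : V} (hxa : x ≠ a) (hxb : x ≠ b) (hab : a ≠ b)
    (hcase : (pos a < pos x ∧ pos x < pos b) ∨ (pos a < pos b ∧ pos b < pos x) ∨
             (pos x < pos a ∧ pos a < pos b))
    (hu : u ∈ away pos x b a) : x ∈ away pos a u b := by
  have hux := mem_away_ne₁ hu
  have hub := mem_away_ne₂ hu
  have hua := mem_away_ne₃ hu
  have hux' : pos u ≠ pos x := pne' hinj hux
  have hub' : pos u ≠ pos b := pne' hinj hub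
  have hua' : pos u ≠ pos a := pne' hinj hua
  rcases hcase with ⟨h1, h2⟩ | ⟨h1, h2⟩ | ⟨h1, h2⟩
  · -- α < ξ < β
    rw [away_eq_ins x b a (by rw [arcBtw_or]; rintro (⟨_, _⟩ | ⟨_, _⟩) <;> linarith)] at hu
    rw [mem_ins, arcBtw_iff h2] at hu
    rw [away_eq_ins a u b (by rw [arcBtw_or]; rintro (⟨_, _⟩ | ⟨_, _⟩) <;> linarith)]
    rw [mem_ins, arcBtw_iff (by linarith : pos a < pos u)]
    exact ⟨h1, hu.1⟩
  · -- α < β < ξ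
    rw [away_eq_ins x b a (by rw [arcBtw_or]; rintro (⟨_, _⟩ | ⟨_, _⟩) <;> linarith)] at hu
    rw [mem_ins, arcBtw_or] at hu
    rcases hu with ⟨c1, c2⟩ | ⟨c1, c2⟩
    · linarith
    · -- β < υ < ξ
      rw [away_eq_outs a u b (by rw [arcBtw_or]; exact Or.inl ⟨h1, c1⟩)]
      refine mem_outs.mpr ⟨hxa, Ne.symm hux, ?_⟩
      rw [arcBtw_or]; rintro (⟨d1, d2⟩ | ⟨d1, d2⟩) <;> linarith
  · -- ξ < α < β
    rw [away_eq_outs x b a (by rw [arcBtw_or]; exact Or.inl ⟨h1, h2⟩)] at hu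
    rw [mem_outs, arcBtw_or] at hu
    obtain ⟨_, _, hc⟩ := hu
    have hreg : pos u < pos x ∨ pos b < pos u := by
      rcases lt_trichotomy (pos u) (pos x) with h | h | h
      · exact Or.inl h
      · exact absurd h hux'
      · rcases lt_trichotomy (pos u) (pos b) with h' | h' | h'
        · exact absurd (Or.inl ⟨h, h'⟩) hc
        · exact absurd h' hub'
        · exact Or.inr h'
    rcases hreg with hr | hr
    · rw [away_eq_ins a u b (by rw [arcBtw_or]; rintro (⟨_, _⟩ | ⟨_, _⟩) <;> linarith)]
      rw [mem_ins, arcBtw_or]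
      exact Or.inr ⟨hr, h1⟩
    · rw [away_eq_outs a u b (by rw [arcBtw_or]; exact Or.inl ⟨h2, hr⟩)]
      refine mem_outs.mpr ⟨hxa, Ne.symm hux, ?_⟩
      rw [arcBtw_or]; rintro (⟨d1, d2⟩ | ⟨d1, d2⟩) <;> linarith

/-- T6: if `u` is on the side of `(x,b)` away from `a`, then `x` is on the side
of `(a,u)` away from `b`. -/
lemma self_mem_away {a x b u : V} (hxa : x ≠ a) (hxb : x ≠ b) (hab : a ≠ b)
    (hu : u ∈ away pos x b a) : x ∈ away pos a u b := by
  have hax' := pne' hinj (Ne.symm hxa)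
  have hab' := pne' hinj hab
  have hxb' := pne' hinj hxb
  have hinj' : Function.Injective (fun v => -(pos v)) := fun p q h => by
    simp only [neg_inj] at h; exact hinj h
  rcases hax'.lt_or_gt with h1 | h1 <;> rcases hab'.lt_or_gt with h2 | h2 <;>
    rcases hxb'.lt_or_gt with h3 | h3
  · exact self_mem_away_core hinj hxa hxb hab (Or.inl ⟨h1, h3⟩) hu
  · exact self_mem_away_core hinj hxa hxb hab (Or.inr (Or.inl ⟨h2, h3⟩)) hu
  · exact absurd (h2.trans h1) (lt_asymm h3)
  · have := self_mem_away_core (pos := fun v => -(pos v)) hinj' hxa hxb hab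
      (Or.inr (Or.inr ⟨by simpa using neg_lt_neg h1, by simpa using neg_lt_neg h2⟩))
      (by rw [away_neg]; exact hu)
    rwa [away_neg] at this
  · exact self_mem_away_core hinj hxa hxb hab (Or.inr (Or.inr ⟨h1, h2⟩)) hu
  · exact absurd (h1.trans h2) (lt_asymm h3)
  · have := self_mem_away_core (pos := fun v => -(pos v)) hinj' hxa hxb hab
      (Or.inr (Or.inl ⟨by simpa using neg_lt_neg h2, by simpa using neg_lt_neg h3⟩))
      (by rw [away_neg]; exact hu)
    rwa [away_neg] at this
  · have := self_mem_away_core (pos := fun v => -(pos v)) hinj' hxa hxb hab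
      (Or.inl ⟨by simpa using neg_lt_neg h1, by simpa using neg_lt_neg h3⟩)
      (by rw [away_neg]; exact hu)
    rwa [away_neg] at this

end Bash3

/-- V5: crossing chords characterized by sides. -/
lemma crossPairs_iff {a b c d : V} :
    CrossPairs pos a b c d ↔
      (c ∈ ins pos a b ∧ d ∈ outs pos a b) ∨ (d ∈ ins pos a b ∧ c ∈ outs pos a b) := by
  constructor
  · rintro ⟨hac, had, hbc, hbd, h⟩
    rcases h with ⟨h1, h2⟩ | ⟨h1, h2⟩
    · exact Or.inl ⟨h1, Ne.symm had, Ne.symm hbd, h2⟩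
    · exact Or.inr ⟨h1, Ne.symm hac, Ne.symm hbc, h2⟩
  · rintro (⟨h1, h2⟩ | ⟨h1, h2⟩)
    · exact ⟨Ne.symm (mem_ins_ne₁ h1), Ne.symm h2.1, Ne.symm (mem_ins_ne₂ h1), Ne.symm h2.2.1,
        Or.inl ⟨h1, h2.2.2⟩⟩
    · exact ⟨Ne.symm h2.1, Ne.symm (mem_ins_ne₁ h1), Ne.symm h2.2.1, Ne.symm (mem_ins_ne₂ h1),
        Or.inr ⟨h1, h2.2.2⟩⟩

lemma crossPairs_swap (hinj : Function.Injective pos) {a b c d : V}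
    (h : CrossPairs pos a b c d) : CrossPairs pos c d a b := by
  obtain ⟨hac, had, hbc, hbd, hI⟩ := h
  exact ⟨Ne.symm hac, Ne.symm hbc, Ne.symm had, Ne.symm hbd,
    intertwined_swap (pne' hinj hac) (pne' hinj had) (pne' hinj hbc) (pne' hinj hbd) hI⟩

/-- V4: consecutiveness in terms of empty sides. -/
lemma consecutive_iff {a b : V} :
    ConsecutiveAt pos a b ↔ a ≠ b ∧ (ins pos a b = ∅ ∨ outs pos a b = ∅) := by
  constructor
  · rintro ⟨hab, h | h⟩
    · refine ⟨hab, Or.inr ?_⟩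
      ext y; simp only [Set.mem_empty_iff_false, iff_false]
      intro hy; exact hy.2.2 (h y hy.1 hy.2.1)
    · refine ⟨hab, Or.inl ?_⟩
      ext y; simp only [Set.mem_empty_iff_false, iff_false]
      intro hy; exact h y (mem_ins_ne₁ hy) (mem_ins_ne₂ hy) hy
  · rintro ⟨hab, h | h⟩
    · refine ⟨hab, Or.inr fun x hxa hxb hx => ?_⟩
      rw [Set.eq_empty_iff_forall_notMem] at h
      exact h x hx
    · refine ⟨hab, Or.inl fun x hxa hxb => ?_⟩
      by_contra hx
      rw [Set.eq_empty_iff_forall_notMem] at h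
      exact h x ⟨hxa, hxb, hx⟩

/-- A link of a triangulation is not crossed by any chord of a diagonal. -/
lemma link_not_crossed {T : PolyTriangulation pos} {a b u w : V} {f : Sym2 V}
    (hL : T.IsLink a b) (hf : f ∈ T.diags) (hfe : f = s(u, w))
    (hu : u ∈ ins pos a b) (hw : w ∈ outs pos a b) : False := by
  have hcp : CrossPairs pos a b u w := crossPairs_iff.mpr (Or.inl ⟨hu, hw⟩)
  rcases hL with hcons | hdiag
  · rcases (consecutive_iff.mp hcons).2 with h | h
    · rw [Set.eq_empty_iff_forall_notMem] at h; exact h u hu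
    · rw [Set.eq_empty_iff_forall_notMem] at h; exact h w hw
  · exact T.noncross _ hdiag _ hf ⟨a, b, u, w, rfl, hfe, hcp⟩

/-- The separator construction from a single link. -/
lemma sep_of_link [Fintype V] (G : SimpleGraph V) {a b : V} {c : ℕ} (hab : a ≠ b)
    (hc : crossNum G pos a b ≤ c) :
    ∃ A B : Set V, A ∪ B = Set.univ ∧
      (∀ u ∈ A \ B, ∀ v ∈ B \ A, ¬ G.Adj u v) ∧
      A \ B ⊆ ins pos a b ∧ B \ A ⊆ outs pos a b ∧ (A ∩ B).ncard ≤ c + 2 := by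
  classical
  set X : Set (Sym2 V) := {e | e ∈ G.edgeSet ∧ Pierces pos e a b} with hX
  have hXcard : X.ncard ≤ c := hc
  set pick : Sym2 V → V := fun e =>
    if h : ∃ v, v ∈ ins pos a b ∧ v ∈ e then h.choose else a with hpickdef
  have hpick : ∀ e ∈ X, pick e ∈ ins pos a b ∧ pick e ∈ e := by
    rintro e ⟨he, u', w', hew, hcp⟩
    have hex : ∃ v, v ∈ ins pos a b ∧ v ∈ e := by
      rcases crossPairs_iff.mp hcp with ⟨h1, h2⟩ | ⟨h1, h2⟩
      · exact ⟨u', h1, by rw [hew]; exact Sym2.mem_mk_left _ _⟩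
      · exact ⟨w', h1, by rw [hew]; exact Sym2.mem_mk_right _ _⟩
    simp only [hpickdef, dif_pos hex]
    exact hex.choose_spec
  set S : Set V := {a, b} ∪ pick '' X with hS
  refine ⟨ins pos a b ∪ S, outs pos a b ∪ S, ?_, ?_, ?_, ?_, ?_⟩
  · ext y; simp only [Set.mem_union, Set.mem_univ, iff_true]
    by_cases hya : y = a
    · exact Or.inl (Or.inr (Or.inl (Or.inl hya)))
    · by_cases hyb : y = b
      · exact Or.inl (Or.inr (Or.inl (Or.inr hyb)))
      · by_cases harc : ArcBtw (pos y) (pos a) (pos b)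
        · exact Or.inl (Or.inl harc)
        · exact Or.inr (Or.inl ⟨hya, hyb, harc⟩)
  · rintro u ⟨huA, huB⟩ v ⟨hvB, hvA⟩ hadj
    have huS : u ∉ S := fun h => huB (Or.inr h)
    have hvS : v ∉ S := fun h => hvA (Or.inr h)
    have hu : u ∈ ins pos a b := huA.resolve_right huS
    have hv : v ∈ outs pos a b := hvB.resolve_right hvS
    have heX : s(u, v) ∈ X := ⟨hadj, u, v, rfl, crossPairs_iff.mpr (Or.inl ⟨hu, hv⟩)⟩
    obtain ⟨hp1, hp2⟩ := hpick _ heX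
    rcases Sym2.mem_iff.mp hp2 with h | h
    · exact huS (Or.inr ⟨s(u,v), heX, h⟩)
    · rw [h] at hp1; exact (ins_disj_outs hp1) hv
  · rintro y ⟨hyA, hyB⟩
    exact hyA.resolve_right fun h => hyB (Or.inr h)
  · rintro y ⟨hyB, hyA⟩
    exact hyB.resolve_right fun h => hyA (Or.inr h)
  · have hsub : (ins pos a b ∪ S) ∩ (outs pos a b ∪ S) ⊆ S := by
      rintro y ⟨hy1, hy2⟩
      rcases hy1 with hy1 | hy1
      · rcases hy2 with hy2 | hy2
        · exact absurd hy2 (ins_disj_outs hy1)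
        · exact hy2
      · exact hy1
    calc ((ins pos a b ∪ S) ∩ (outs pos a b ∪ S)).ncard ≤ S.ncard :=
          Set.ncard_le_ncard hsub (Set.toFinite _)
      _ ≤ ({a, b} : Set V).ncard + (pick '' X).ncard :=
          Set.ncard_union_le _ _
      _ ≤ 2 + c := add_le_add (le_of_eq (Set.ncard_pair hab))
          (le_trans (Set.ncard_image_le (Set.toFinite _)) hXcard)
      _ = c + 2 := Nat.add_comm _ _

/-! derived corollaries of `three_arcs` -/

lemma crossPairs_comm₂ {a b c d : V} (h : CrossPairs pos a b c d) : CrossPairs pos a b d c := by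
  obtain ⟨h1, h2, h3, h4, h5⟩ := h
  refine ⟨h2, h1, h4, h3, ?_⟩
  rw [Intertwined] at h5 ⊢
  unfold Xor' at h5 ⊢; rwa [xor_comm]

variable (hinj : Function.Injective pos)
include hinj

lemma arc1_subset {a x b : V} (hax : a ≠ x) (hab : a ≠ b) (hxb : x ≠ b) :
    away pos a x b ⊆ sideWith pos a b x := by
  intro y hy
  have hya := mem_away_ne₁ hy
  have hyx := mem_away_ne₂ hy
  have hyb := mem_away_ne₃ hy
  rcases three_arcs hinj hax hab hxb hya hyb hyx with ⟨_, _, h3⟩ | ⟨h1, _, _⟩ | ⟨h1, _, _⟩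
  · exact (mem_away_or_sideWith hya hyb).resolve_left h3
  · exact absurd hy h1
  · exact absurd hy h1

lemma arc2_subset {a x b : V} (hax : a ≠ x) (hab : a ≠ b) (hxb : x ≠ b) :
    away pos x b a ⊆ sideWith pos a b x := by
  intro y hy
  have hyx := mem_away_ne₁ hy
  have hyb := mem_away_ne₂ hy
  have hya := mem_away_ne₃ hy
  rcases three_arcs hinj hax hab hxb hya hyb hyx with ⟨_, h2, _⟩ | ⟨_, _, h3⟩ | ⟨_, h2, _⟩
  · exact absurd hy h2
  · exact (mem_away_or_sideWith hya hyb).resolve_left h3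
  · exact absurd hy h2

lemma side_partition {a x b y : V} (hax : a ≠ x) (hab : a ≠ b) (hxb : x ≠ b)
    (hy : y ∈ sideWith pos a b x) (hyx : y ≠ x) :
    y ∈ away pos a x b ∨ y ∈ away pos x b a := by
  have hya : y ≠ a := fun h => not_mem_sideWith_left (h ▸ hy)
  have hyb : y ≠ b := fun h => not_mem_sideWith_right (h ▸ hy)
  rcases three_arcs hinj hax hab hxb hya hyb hyx with ⟨h1, _, _⟩ | ⟨_, h2, _⟩ | ⟨_, _, h3⟩
  · exact Or.inl h1
  · exact Or.inr h2
  · exact absurd hy (away_disj_sideWith h3)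

lemma arcs_disjoint {a x b y : V} (hax : a ≠ x) (hab : a ≠ b) (hxb : x ≠ b)
    (hy : y ∈ away pos a x b) : y ∉ away pos x b a := by
  have hya := mem_away_ne₁ hy
  have hyx := mem_away_ne₂ hy
  have hyb := mem_away_ne₃ hy
  rcases three_arcs hinj hax hab hxb hya hyb hyx with ⟨_, h2, _⟩ | ⟨h1, _, _⟩ | ⟨h1, _, _⟩
  · exact h2
  · exact absurd hy h1
  · exact absurd hy h1

lemma arc2_subset_side₂ {a x b : V} (hax : a ≠ x) (hab : a ≠ b) (hxb : x ≠ b) :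
    away pos x b a ⊆ sideWith pos a x b := by
  intro y hy
  have hyx := mem_away_ne₁ hy
  have hyb := mem_away_ne₂ hy
  have hya := mem_away_ne₃ hy
  rcases three_arcs hinj hax hab hxb hya hyb hyx with ⟨_, h2, _⟩ | ⟨h1, _, _⟩ | ⟨_, h2, _⟩
  · exact absurd hy h2
  · exact (mem_away_or_sideWith hya hyx).resolve_left h1
  · exact absurd hy h2

section WithCard
variable [Fintype V]

lemma ncard_ins_outs {a b : V} (hab : a ≠ b) :
    (ins pos a b).ncard + (outs pos a b).ncard + 2 = Fintype.card V := by
  have hu : ins pos a b ∪ outs pos a b = ({a, b} : Set V)ᶜ := by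
    ext y
    simp only [Set.mem_union, Set.mem_compl_iff, Set.mem_insert_iff, Set.mem_singleton_iff]
    constructor
    · rintro (h | h)
      · push_neg
        exact ⟨mem_ins_ne₁ h, mem_ins_ne₂ h⟩
      · push_neg
        exact ⟨h.1, h.2.1⟩
    · intro h
      push_neg at h
      by_cases harc : ArcBtw (pos y) (pos a) (pos b)
      · exact Or.inl harc
      · exact Or.inr ⟨h.1, h.2, harc⟩
  have hd : Disjoint (ins pos a b) (outs pos a b) := Set.disjoint_left.mpr fun {y} hy => ins_disj_outs hy
  have h1 : (ins pos a b).ncard + (outs pos a b).ncard = (({a, b} : Set V)ᶜ).ncard := by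
    rw [← hu, Set.ncard_union_eq hd (Set.toFinite _) (Set.toFinite _)]
  have h2 : ({a, b} : Set V).ncard + (({a, b} : Set V)ᶜ).ncard = Fintype.card V := by
    rw [Set.ncard_add_ncard_compl, Nat.card_eq_fintype_card]
  rw [h1]
  rw [Set.ncard_pair hab] at h2
  omega

lemma ncard_partition {a x b : V} (hax : a ≠ x) (hab : a ≠ b) (hxb : x ≠ b) :
    (away pos a x b).ncard + (away pos x b a).ncard + 1 = (sideWith pos a b x).ncard := by
  have hxa : x ≠ a := Ne.symm hax
  have hset : away pos a x b ∪ insert x (away pos x b a) = sideWith pos a b x := by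
    ext y
    simp only [Set.mem_union, Set.mem_insert_iff]
    constructor
    · rintro (hy | rfl | hy)
      · exact arc1_subset hinj hax hab hxb hy
      · exact mem_sideWith_self hxa hxb
      · exact arc2_subset hinj hax hab hxb hy
    · intro hy
      by_cases hyx : y = x
      · exact Or.inr (Or.inl hyx)
      · rcases side_partition hinj hax hab hxb hy hyx with h | h
        · exact Or.inl h
        · exact Or.inr (Or.inr h)
  have hdisj : Disjoint (away pos a x b) (insert x (away pos x b a)) := by
    rw [Set.disjoint_left]
    intro y hy
    simp only [Set.mem_insert_iff]
    push_neg
    exact ⟨mem_away_ne₂ hy, arcs_disjoint hinj hax hab hxb hy⟩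
  rw [← hset, Set.ncard_union_eq hdisj (Set.toFinite _) (Set.toFinite _),
    Set.ncard_insert_of_notMem not_mem_away_left (Set.toFinite _)]
  omega

/-- The triangle step: given a link `(a,b)` and a nonempty side `S`, there is
`x ∈ S` such that `(a,x)` and `(x,b)` are links, and the two arcs of `S` cut
off by `x` partition `S \ {x}`. -/
lemma triangle_step (T : PolyTriangulation pos) {a b : V} {S : Set V} (hab : a ≠ b)
    (hL : T.IsLink a b) (hSor : S = ins pos a b ∨ S = outs pos a b)
    {x0 : V} (hx0 : x0 ∈ S) :
    ∃ x ∈ S, (a ≠ x ∧ T.IsLink a x) ∧ (x ≠ b ∧ T.IsLink x b) ∧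
      (away pos a x b).ncard + (away pos x b a).ncard + 1 = S.ncard := by
  have hSmem : ∀ y ∈ S, y ≠ a ∧ y ≠ b := by
    intro y hy
    rcases hSor with rfl | rfl
    · exact ⟨mem_ins_ne₁ hy, mem_ins_ne₂ hy⟩
    · exact ⟨hy.1, hy.2.1⟩
  have hside : ∀ y ∈ S, sideWith pos a b y = S := by
    intro y hy
    rcases hSor with rfl | rfl
    · exact if_pos hy
    · exact if_neg hy.2.2
  -- every arc (toward a) of a point of S stays in S
  have harcS : ∀ y ∈ S, away pos a y b ⊆ S := by
    intro y hy
    have hy' := hSmem y hy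
    rw [← hside y hy]
    exact arc1_subset hinj (Ne.symm hy'.1) hab hy'.2
  have harcS2 : ∀ y ∈ S, away pos y b a ⊆ S := by
    intro y hy
    have hy' := hSmem y hy
    rw [← hside y hy]
    exact arc2_subset hinj (Ne.symm hy'.1) hab hy'.2
  -- the set of points of S linked to a
  set E : Set V := {y ∈ S | T.IsLink a y} with hE
  -- E is nonempty : take x1 ∈ S minimizing the arc toward a
  obtain ⟨x1, hx1S, hx1min⟩ := Set.exists_min_image S (fun y => (away pos a y b).ncard)
    (Set.toFinite _) ⟨x0, hx0⟩
  have hx1empty : away pos a x1 b = ∅ := by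
    by_contra hne
    obtain ⟨y, hy⟩ := Set.nonempty_iff_ne_empty.mpr hne
    have hyS : y ∈ S := harcS x1 hx1S hy
    have hx1' := hSmem x1 hx1S
    have hsub : away pos a y b ⊆ away pos a x1 b :=
      away_sub_away hinj hab hx1'.2 (Ne.symm hx1'.1) hy
    have hlt : (away pos a y b).ncard < (away pos a x1 b).ncard := by
      have h1 : away pos a y b ⊆ away pos a x1 b \ {y} := by
        intro z hz
        exact ⟨hsub hz, by simpa using mem_away_ne₂ hz⟩
      calc (away pos a y b).ncard ≤ (away pos a x1 b \ {y}).ncard :=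
            Set.ncard_le_ncard h1 (Set.toFinite _)
        _ < (away pos a x1 b).ncard :=
            Set.ncard_diff_singleton_lt_of_mem hy (Set.toFinite _)
    exact absurd (hx1min y hyS) (by omega)
  have hx1link : T.IsLink a x1 := by
    left
    refine consecutive_iff.mpr ⟨Ne.symm (hSmem x1 hx1S).1, ?_⟩
    rcases away_eq_or (pos := pos) (a := a) (b := x1) (x := b) with h | h
    · exact Or.inl (h ▸ hx1empty)
    · exact Or.inr (h ▸ hx1empty)
  have hEne : E.Nonempty := ⟨x1, hx1S, hx1link⟩
  -- take x ∈ E maximizing the arc toward a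
  obtain ⟨x, hxE, hxmax⟩ := Set.exists_max_image E (fun y => (away pos a y b).ncard)
    (Set.toFinite _) hEne
  obtain ⟨hxS, hxLink⟩ := hxE
  obtain ⟨hxa, hxb⟩ := hSmem x hxS
  have hax : a ≠ x := Ne.symm hxa
  -- claim : (x, b) is a link
  have hxbL : T.IsLink x b := by
    by_contra hnot
    have hncons : ¬ ConsecutiveAt pos x b := fun h => hnot (Or.inl h)
    have hndiag : s(x, b) ∉ T.diags := fun h => hnot (Or.inr h)
    obtain ⟨f, hf, p, q, r, s', hf_eq, hs_eq, hcp⟩ := T.maximal x b hxb hncons hndiag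
    -- normalize the second pair to (x, b)
    have hcpxb : CrossPairs pos p q x b := by
      rcases Sym2.eq_iff.mp hs_eq with ⟨h1, h2⟩ | ⟨h1, h2⟩
      · rw [h1, h2]; exact hcp
      · rw [h1, h2]; exact crossPairs_comm₂ hcp
    have hswap := crossPairs_swap hinj hcpxb
    -- p, q are on opposite sides of the chord (x, b)
    have hpq : (p ∈ away pos x b a ∧ q ∈ sideWith pos x b a) ∨
        (q ∈ away pos x b a ∧ p ∈ sideWith pos x b a) := by
      have h := crossPairs_iff.mp hswap
      rw [away, sideWith]
      split_ifs with hcond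
      · tauto
      · tauto
    -- f is not a chord from the a-side region to Q
    have key : ∀ u w : V, f = s(u, w) → u ∈ away pos x b a → w ∈ sideWith pos x b a → False := by
      intro u w hfe hu hw
      have huS : u ∈ S := harcS2 x hxS hu
      have hwa : w = a ∨ w ∈ away pos x a b ∨ w ∈ away pos a b x := by
        by_cases hwa' : w = a
        · exact Or.inl hwa'
        · exact Or.inr (side_partition hinj hxa hxb hab hw hwa')
      rcases hwa with rfl | hw2 | hw2
      · -- f = s(u, a) : then u ∈ E with a larger arc toward a, contradiction
        have hua : u ≠ w := mem_away_ne₃ hu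
        have huLink : T.IsLink w u := by
          right
          have : f = s(w, u) := by rw [hfe, Sym2.eq_swap]
          rwa [← this]
        have huE : u ∈ E := ⟨huS, huLink⟩
        have hub : u ≠ b := mem_away_ne₂ hu
        have hxmem : x ∈ away pos w u b := self_mem_away hinj hxa hxb hab hu
        have hsub : away pos w x b ⊆ away pos w u b :=
          away_sub_away hinj hab hub (Ne.symm hua) hxmem
        have hlt : (away pos w x b).ncard < (away pos w u b).ncard := by
          have h1 : away pos w x b ⊆ away pos w u b \ {x} := by
            intro z hz
            exact ⟨hsub hz, by simpa using mem_away_ne₂ hz⟩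
          calc (away pos w x b).ncard ≤ (away pos w u b \ {x}).ncard :=
                Set.ncard_le_ncard h1 (Set.toFinite _)
            _ < (away pos w u b).ncard :=
                Set.ncard_diff_singleton_lt_of_mem hxmem (Set.toFinite _)
        exact absurd (hxmax u huE) (by omega)
      · -- w on the a-side arc of the chord (a, x) : f crosses the link (a, x)
        rw [show away pos x a b = away pos a x b from away_comm] at hw2
        have huside : u ∈ sideWith pos a x b :=
          arc2_subset_side₂ hinj hax hab hxb hu
        rcases opposite_sides hw2 huside with ⟨h1, h2⟩ | ⟨h1, h2⟩
        · exact link_not_crossed hxLink hf (by rw [hfe, Sym2.eq_swap]) h1 h2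
        · exact link_not_crossed hxLink hf hfe h1 h2
      · -- w on the far side of the chord (a, b) : f crosses the link (a, b)
        have huside : u ∈ sideWith pos a b x := (hside x hxS).symm ▸ huS
        rcases opposite_sides hw2 huside with ⟨h1, h2⟩ | ⟨h1, h2⟩
        · exact link_not_crossed hL hf (by rw [hfe, Sym2.eq_swap]) h1 h2
        · exact link_not_crossed hL hf hfe h1 h2
    rcases hpq with ⟨h1, h2⟩ | ⟨h1, h2⟩
    · exact key p q hf_eq h1 h2
    · exact key q p (by rw [hf_eq, Sym2.eq_swap]) h1 h2
  refine ⟨x, hxS, ⟨hax, hxLink⟩, ⟨hxb, hxbL⟩, ?_⟩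
  rw [ncard_partition hinj hax hab hxb, hside x hxS]

end WithCard

omit hinj in
/-- a consecutive pair is never pierced. -/
lemma crossNum_consecutive (G : SimpleGraph V) {a b : V} (h : ConsecutiveAt pos a b) :
    crossNum G pos a b = 0 := by
  have hset : {e ∈ G.edgeSet | Pierces pos e a b} = ∅ := by
    ext e
    simp only [Set.mem_setOf_eq, Set.mem_empty_iff_false, iff_false, not_and]
    rintro - ⟨c', d', -, hcp⟩
    rcases (consecutive_iff.mp h).2 with hemp | hemp <;>
      rcases crossPairs_iff.mp hcp with ⟨h1, h2⟩ | ⟨h1, h2⟩ <;>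
      rw [Set.eq_empty_iff_forall_notMem] at hemp
    · exact hemp _ h1
    · exact hemp _ h1
    · exact hemp _ h2
    · exact hemp _ h2
  rw [crossNum, hset, Set.ncard_empty]

lemma exists_balanced_link [Fintype V] (hn : 3 ≤ Fintype.card V) (T : PolyTriangulation pos) :
    ∃ a b : V, a ≠ b ∧ T.IsLink a b ∧ 3 * (ins pos a b).ncard ≤ 2 * Fintype.card V ∧
      3 * (outs pos a b).ncard ≤ 2 * Fintype.card V := by
  have hpos : 0 < Fintype.card V := by omega
  have hne : Nonempty V := Fintype.card_pos_iff.mp hpos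
  obtain ⟨a0, -, ha0⟩ := Finset.exists_min_image Finset.univ pos
    ⟨Classical.arbitrary V, Finset.mem_univ _⟩
  have herase : (Finset.univ.erase a0).Nonempty := by
    rw [← Finset.card_pos, Finset.card_erase_of_mem (Finset.mem_univ _), Finset.card_univ]
    omega
  obtain ⟨b0, hb0m, hb0⟩ := Finset.exists_min_image _ pos herase
  have hab0 : a0 ≠ b0 := fun h => Finset.ne_of_mem_erase hb0m h.symm
  have hcons : ConsecutiveAt pos a0 b0 := by
    refine consecutive_iff.mpr ⟨hab0, Or.inl ?_⟩
    ext y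
    simp only [Set.mem_empty_iff_false, iff_false]
    intro hy
    have h01 : pos a0 < pos b0 :=
      lt_of_le_of_ne (ha0 b0 (Finset.mem_univ _)) (pne' hinj hab0)
    rw [mem_ins, arcBtw_iff h01] at hy
    have hya0 : y ≠ a0 := fun h => by rw [h] at hy; exact lt_irrefl _ hy.1
    have hge : pos b0 ≤ pos y := hb0 y (Finset.mem_erase.mpr ⟨hya0, Finset.mem_univ _⟩)
    linarith [hy.2]
  set M : Set (V × V) := {p | p.1 ≠ p.2 ∧ T.IsLink p.1 p.2} with hM
  obtain ⟨p, hpM, hmin'⟩ := Set.exists_min_image M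
    (fun p => max (ins pos p.1 p.2).ncard (outs pos p.1 p.2).ncard) (Set.toFinite _)
    ⟨(a0, b0), hab0, Or.inl hcons⟩
  obtain ⟨a, b⟩ := p
  obtain ⟨hab', hL'⟩ := hpM
  have hab : a ≠ b := hab'
  have hL : T.IsLink a b := hL'
  clear hab' hL'
  have hmin : ∀ q ∈ M, max (ins pos a b).ncard (outs pos a b).ncard ≤
      max (ins pos q.1 q.2).ncard (outs pos q.1 q.2).ncard := hmin'
  by_cases hgood : 3 * max (ins pos a b).ncard (outs pos a b).ncard ≤ 2 * Fintype.card V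
  · have hl := le_max_left (ins pos a b).ncard (outs pos a b).ncard
    have hr := le_max_right (ins pos a b).ncard (outs pos a b).ncard
    exact ⟨a, b, hab, hL, by omega, by omega⟩
  · exfalso
    push_neg at hgood
    have hio := ncard_ins_outs hinj hab
    have hSex : ∃ S : Set V, (S = ins pos a b ∨ S = outs pos a b) ∧
        S.ncard = max (ins pos a b).ncard (outs pos a b).ncard := by
      rcases max_cases (ins pos a b).ncard (outs pos a b).ncard with ⟨h, -⟩ | ⟨h, -⟩
      · exact ⟨ins pos a b, Or.inl rfl, h.symm⟩
      · exact ⟨outs pos a b, Or.inr rfl, h.symm⟩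
    obtain ⟨S, hSor, hScard⟩ := hSex
    have hgood' : 2 * Fintype.card V < 3 * S.ncard := by rw [hScard]; exact hgood
    have hSne : S.Nonempty := Set.nonempty_of_ncard_ne_zero (by omega)
    obtain ⟨x0, hx0⟩ := hSne
    obtain ⟨x, hxS, ⟨hax, haxL⟩, ⟨hxb, hxbL⟩, hpart⟩ := triangle_step hinj T hab hL hSor hx0
    have h1 : S.ncard ≤ max (ins pos a x).ncard (outs pos a x).ncard := by
      rw [hScard]; exact hmin (a, x) ⟨hax, haxL⟩
    have h2 : S.ncard ≤ max (ins pos x b).ncard (outs pos x b).ncard := by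
      rw [hScard]; exact hmin (x, b) ⟨hxb, hxbL⟩
    have hio1 := ncard_ins_outs hinj hax
    have hio2 := ncard_ins_outs hinj hxb
    have h1' : S.ncard ≤ (ins pos a x).ncard ∨ S.ncard ≤ (outs pos a x).ncard := le_max_iff.mp h1
    have h2' : S.ncard ≤ (ins pos x b).ncard ∨ S.ncard ≤ (outs pos x b).ncard := le_max_iff.mp h2
    have hP := away_eq_or (pos := pos) (a := a) (b := x) (x := b)
    have hQ := away_eq_or (pos := pos) (a := x) (b := b) (x := a)
    have hPbig : (away pos a x b).ncard + S.ncard + 2 ≤ Fintype.card V := by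
      rcases hP with h | h <;> rw [h] <;> rw [h] at hpart <;> rcases h1' with h' | h' <;> omega
    have hQbig : (away pos x b a).ncard + S.ncard + 2 ≤ Fintype.card V := by
      rcases hQ with h | h <;> rw [h] <;> rw [h] at hpart <;> rcases h2' with h' | h' <;> omega
    omega


end BalSep

/-- If the vertices of `G` lie in convex position (injective `pos`) and the
outer cycle admits a triangulation `T` each of whose diagonals is intertwined
with at most `c` edges of `G`, then `G` has a balanced separation of order at
most `c + 2`: a separation `(A, B)` with `|A ∩ B| ≤ c + 2` and
`|A \ B|, |B \ A| ≤ 2n/3`. -/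
theorem balanced_separation_of_triangulation {V : Type*} [Fintype V]
    (G : SimpleGraph V) (pos : V → ℝ) (hinj : Function.Injective pos)
    (hn : 3 ≤ Fintype.card V) (c : ℕ)
    (T : PolyTriangulation pos)
    (hpierce : ∀ e ∈ T.diags, ∀ a b : V, e = s(a, b) → crossNum G pos a b ≤ c) :
    ∃ A B : Set V,
      A ∪ B = Set.univ ∧
      (∀ a ∈ A \ B, ∀ b ∈ B \ A, ¬ G.Adj a b) ∧
      3 * (A \ B).ncard ≤ 2 * Fintype.card V ∧
      3 * (B \ A).ncard ≤ 2 * Fintype.card V ∧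
      (A ∩ B).ncard ≤ c + 2 := by
  obtain ⟨a, b, hab, hL, h1, h2⟩ := BalSep.exists_balanced_link hinj hn T
  have hcross : crossNum G pos a b ≤ c := by
    rcases hL with hcons | hdiag
    · rw [BalSep.crossNum_consecutive G hcons]
      exact Nat.zero_le c
    · exact hpierce _ hdiag a b rfl
  obtain ⟨A, B, hAB, hadj, hABsub, hBAsub, hcard⟩ := BalSep.sep_of_link G hab hcross
  refine ⟨A, B, hAB, hadj, ?_, ?_, hcard⟩
  · have hm := Set.ncard_le_ncard hABsub (Set.toFinite _)
    omega
  · have hm := Set.ncard_le_ncard hBAsub (Set.toFinite _)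
    omega
end

section
/- For every even k ≥ 0 and n = k/2 + 1, if m is sufficiently large (in particular every balanced separator must be considered, and m > 6n suffices), then the stacked prism Y_{m,n} has no balanced separator of size less than 2n: for every vertex set S with |S| < 2n, some connected component of Y_{m,n} − S has more than 2mn/3 vertices. -/
/-- The `m × n` stacked prism `Y_{m,n}`: the `m × n` grid graph (row edges
between horizontally adjacent vertices, column edges between vertically
adjacent vertices) with additional edges joining, in each column `j`, the top
vertex `(0, j)` to the bottom vertex `(m−1, j)`. -/
def stackedPrism (m n : ℕ) : SimpleGraph (Fin m × Fin n) :=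
  SimpleGraph.fromRel (fun p q =>
    (p.1 = q.1 ∧ (q.2 : ℕ) = (p.2 : ℕ) + 1) ∨
    (p.2 = q.2 ∧ ((q.1 : ℕ) = (p.1 : ℕ) + 1 ∨ ((p.1 : ℕ) = 0 ∧ (q.1 : ℕ) = m - 1))))

open SimpleGraph

section helpers

variable {m n : ℕ} {S : Set (Fin m × Fin n)}

lemma sp_adj_row {i : Fin m} {j j' : Fin n} (h : (j' : ℕ) = (j : ℕ) + 1) :
    (stackedPrism m n).Adj (i, j) (i, j') := by
  rw [stackedPrism, SimpleGraph.fromRel_adj]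
  refine ⟨?_, Or.inl (Or.inl ⟨rfl, h⟩)⟩
  intro he
  have : j = j' := (Prod.ext_iff.mp he).2
  subst this; omega

lemma sp_adj_col {i i' : Fin m} {j : Fin n} (h : (i' : ℕ) = (i : ℕ) + 1) :
    (stackedPrism m n).Adj (i, j) (i', j) := by
  rw [stackedPrism, SimpleGraph.fromRel_adj]
  refine ⟨?_, Or.inl (Or.inr ⟨rfl, Or.inl h⟩)⟩
  intro he
  have : i = i' := (Prod.ext_iff.mp he).1
  subst this; omega

lemma sp_adj_wrap (hm : 2 ≤ m) {i i' : Fin m} {j : Fin n}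
    (h0 : (i : ℕ) = 0) (h1 : (i' : ℕ) = m - 1) :
    (stackedPrism m n).Adj (i, j) (i', j) := by
  rw [stackedPrism, SimpleGraph.fromRel_adj]
  refine ⟨?_, Or.inl (Or.inr ⟨rfl, Or.inr ⟨h0, h1⟩⟩)⟩
  intro he
  have : i = i' := (Prod.ext_iff.mp he).1
  subst this; omega

lemma induce_adj' (u v : ↥Sᶜ) (h : (stackedPrism m n).Adj u.1 v.1) :
    ((stackedPrism m n).induce Sᶜ).Adj u v := by
  simpa [SimpleGraph.comap_adj] using h

/-- reachability along a chain -/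
lemma reach_chain {V : Type*} (G : SimpleGraph V) (f : ℕ → V) (L : ℕ)
    (h : ∀ t < L, G.Adj (f t) (f (t + 1))) : G.Reachable (f 0) (f L) := by
  induction L with
  | zero => exact Reachable.refl _
  | succ L ih =>
      exact (ih (fun t ht => h t (Nat.lt_succ_of_lt ht))).trans
        (h L (Nat.lt_succ_self L)).reachable

/-- all vertices of a clean row are connected -/
lemma row_reach {i : Fin m} (hrow : ∀ j : Fin n, (i, j) ∉ S) (j j' : Fin n) :
    ((stackedPrism m n).induce Sᶜ).Reachable ⟨(i, j), hrow j⟩ ⟨(i, j'), hrow j'⟩ := by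
  -- reduce to the case j ≤ j'
  suffices H : ∀ j j' : Fin n, (j : ℕ) ≤ (j' : ℕ) →
      ((stackedPrism m n).induce Sᶜ).Reachable ⟨(i, j), hrow j⟩ ⟨(i, j'), hrow j'⟩ by
    rcases le_total (j : ℕ) (j' : ℕ) with h | h
    · exact H j j' h
    · exact (H j' j h).symm
  intro j j' hle
  have hb : (j' : ℕ) < n := j'.isLt
  set f : ℕ → ↥Sᶜ := fun t =>
    ⟨(i, ⟨min ((j : ℕ) + t) (j' : ℕ), lt_of_le_of_lt (min_le_right _ _) hb⟩),
      hrow _⟩ with hf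
  have h0 : f 0 = ⟨(i, j), hrow j⟩ := by
    simp only [hf]
    congr 1
    exact Prod.ext rfl (Fin.ext (by simp [Nat.min_eq_left hle]))
  have hL : f ((j' : ℕ) - (j : ℕ)) = ⟨(i, j'), hrow j'⟩ := by
    simp only [hf]
    congr 1
    exact Prod.ext rfl (Fin.ext (by simp; omega))
  rw [← h0, ← hL]
  apply reach_chain
  intro t ht
  apply induce_adj'
  exact sp_adj_row (by simp only [hf]; omega)

/-- ascending segment in a clean part of a column -/
lemma col_reach {a b : Fin m} {j : Fin n} (hab : (a : ℕ) ≤ (b : ℕ))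
    (hcol : ∀ t : Fin m, (a : ℕ) ≤ (t : ℕ) → (t : ℕ) ≤ (b : ℕ) → (t, j) ∉ S) :
    ((stackedPrism m n).induce Sᶜ).Reachable
      ⟨(a, j), hcol a le_rfl hab⟩ ⟨(b, j), hcol b hab le_rfl⟩ := by
  have hb : (b : ℕ) < m := b.isLt
  set f : ℕ → ↥Sᶜ := fun t =>
    ⟨(⟨min ((a : ℕ) + t) (b : ℕ), lt_of_le_of_lt (min_le_right _ _) hb⟩, j),
      hcol _ (by dsimp only; omega) (by dsimp only; omega)⟩ with hf
  have h0 : f 0 = ⟨(a, j), hcol a le_rfl hab⟩ := by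
    simp only [hf]
    congr 1
    exact Prod.ext (Fin.ext (by simp [Nat.min_eq_left hab])) rfl
  have hL : f ((b : ℕ) - (a : ℕ)) = ⟨(b, j), hcol b hab le_rfl⟩ := by
    simp only [hf]
    congr 1
    exact Prod.ext (Fin.ext (by simp; omega)) rfl
  rw [← h0, ← hL]
  apply reach_chain
  intro t ht
  apply induce_adj'
  exact sp_adj_col (by simp only [hf]; omega)

end helpers
section part2
variable {m n : ℕ} {S : Set (Fin m × Fin n)}

lemma two_sides (hS : S.ncard < 2 * n) {i i' : Fin m} (hii : (i : ℕ) < (i' : ℕ))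
    (hi : ∀ j : Fin n, (i, j) ∉ S) (hi' : ∀ j : Fin n, (i', j) ∉ S) :
    (∃ j : Fin n, ∀ t : Fin m, (i : ℕ) ≤ (t : ℕ) → (t : ℕ) ≤ (i' : ℕ) → (t, j) ∉ S) ∨
    (∃ j : Fin n, ∀ t : Fin m, ((t : ℕ) ≤ (i : ℕ) ∨ (i' : ℕ) ≤ (t : ℕ)) → (t, j) ∉ S) := by
  by_contra hcon
  push_neg at hcon
  obtain ⟨h1, h2⟩ := hcon
  -- from h1: every column has an S-vertex strictly between i and i'
  have g1 : ∀ j : Fin n, ∃ t : Fin m, (i : ℕ) < (t : ℕ) ∧ (t : ℕ) < (i' : ℕ) ∧ (t, j) ∈ S := by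
    intro j
    obtain ⟨t, ht1, ht2, ht3⟩ := h1 j
    refine ⟨t, ?_, ?_, ht3⟩
    · rcases lt_or_eq_of_le ht1 with h | h
      · exact h
      · exact absurd ht3 (by rw [show t = i from Fin.ext h.symm]; exact hi j)
    · rcases lt_or_eq_of_le ht2 with h | h
      · exact h
      · exact absurd ht3 (by rw [show t = i' from Fin.ext h]; exact hi' j)
  have g2 : ∀ j : Fin n, ∃ t : Fin m, ((t : ℕ) < (i : ℕ) ∨ (i' : ℕ) < (t : ℕ)) ∧ (t, j) ∈ S := by
    intro j
    obtain ⟨t, ht1, ht3⟩ := h2 j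
    refine ⟨t, ?_, ht3⟩
    rcases ht1 with h | h
    · rcases lt_or_eq_of_le h with h' | h'
      · exact Or.inl h'
      · exact absurd ht3 (by rw [show t = i from Fin.ext h']; exact hi j)
    · rcases lt_or_eq_of_le h with h' | h'
      · exact Or.inr h'
      · exact absurd ht3 (by rw [show t = i' from Fin.ext h'.symm]; exact hi' j)
  choose t1 ht1a ht1b ht1c using g1
  choose t2 ht2a ht2c using g2
  set F : Fin n ⊕ Fin n → ↥S := fun x =>
    match x with
    | Sum.inl j => ⟨(t1 j, j), ht1c j⟩
    | Sum.inr j => ⟨(t2 j, j), ht2c j⟩ with hF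
  have hinj : Function.Injective F := by
    intro x y hxy
    have hval := congrArg Subtype.val hxy
    cases x with
    | inl j => cases y with
      | inl j' =>
          simp only [hF] at hval
          exact congrArg Sum.inl (Prod.ext_iff.mp hval).2
      | inr j' =>
          simp only [hF] at hval
          have h1' : t1 j = t2 j' := (Prod.ext_iff.mp hval).1
          have := ht1a j; have := ht1b j; have := ht2a j'
          rw [h1'] at *
          omega
    | inr j => cases y with
      | inl j' =>
          simp only [hF] at hval
          have h1' : t2 j = t1 j' := (Prod.ext_iff.mp hval).1
          have := ht1a j'; have := ht1b j'; have := ht2a j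
          rw [h1'] at *
          omega
      | inr j' =>
          simp only [hF] at hval
          exact congrArg Sum.inr (Prod.ext_iff.mp hval).2
  have hcard : Nat.card (Fin n ⊕ Fin n) ≤ Nat.card ↥S :=
    Nat.card_le_card_of_injective F hinj
  rw [Nat.card_sum, Nat.card_eq_fintype_card, Fintype.card_fin,
    Nat.card_coe_set_eq] at hcard
  omega

lemma clean_connect (hm2 : 2 ≤ m) (hS : S.ncard < 2 * n) {i i' : Fin m}
    (hi : ∀ j : Fin n, (i, j) ∉ S) (hi' : ∀ j : Fin n, (i', j) ∉ S) (j1 j2 : Fin n) :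
    ((stackedPrism m n).induce Sᶜ).Reachable ⟨(i, j1), hi j1⟩ ⟨(i', j2), hi' j2⟩ := by
  suffices H : ∀ (i i' : Fin m), (i : ℕ) ≤ (i' : ℕ) →
      ∀ (hci : ∀ j : Fin n, (i, j) ∉ S) (hci' : ∀ j : Fin n, (i', j) ∉ S), ∀ j1 j2 : Fin n,
      ((stackedPrism m n).induce Sᶜ).Reachable ⟨(i, j1), hci j1⟩ ⟨(i', j2), hci' j2⟩ by
    rcases le_total (i : ℕ) (i' : ℕ) with h | h
    · exact H i i' h hi hi' j1 j2
    · exact (H i' i h hi' hi j2 j1).symm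
  clear hi hi' i i' j1 j2
  intro i i' hle hi hi' j1 j2
  rcases eq_or_lt_of_le hle with heq | hlt
  · have : i = i' := Fin.ext heq
    subst this
    exact row_reach hi j1 j2
  rcases two_sides hS hlt hi hi' with ⟨j, hj⟩ | ⟨j, hj⟩
  · have r1 := row_reach hi j1 j
    have r2 := col_reach (S := S) (a := i) (b := i') (j := j) (le_of_lt hlt) hj
    have r3 := row_reach hi' j j2
    exact (r1.trans r2).trans r3
  · set z : Fin m := ⟨0, by omega⟩ with hz
    set w : Fin m := ⟨m - 1, by omega⟩ with hw
    have hjl : ∀ t : Fin m, (t : ℕ) ≤ (i : ℕ) → (t, j) ∉ S := fun t h => hj t (Or.inl h)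
    have hjr : ∀ t : Fin m, (i' : ℕ) ≤ (t : ℕ) → (t, j) ∉ S := fun t h => hj t (Or.inr h)
    have r1 := row_reach hi j1 j
    have r2 : ((stackedPrism m n).induce Sᶜ).Reachable ⟨(z, j), hjl z (by simp [hz])⟩
        ⟨(i, j), hi j⟩ :=
      col_reach (S := S) (a := z) (b := i) (j := j) (by simp [hz])
        (fun t _ h2 => hjl t h2)
    have r3 : ((stackedPrism m n).induce Sᶜ).Adj ⟨(z, j), hjl z (by simp [hz])⟩
        ⟨(w, j), hjr w (by simp [hw]; omega)⟩ :=
      induce_adj' _ _ (sp_adj_wrap hm2 (by simp [hz]) (by simp [hw]))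
    have r4 : ((stackedPrism m n).induce Sᶜ).Reachable ⟨(i', j), hi' j⟩
        ⟨(w, j), hjr w (by simp [hw]; omega)⟩ :=
      col_reach (S := S) (a := i') (b := w) (j := j) (by simp [hw]; omega)
        (fun t h1 _ => hjr t h1)
    have r5 := row_reach hi' j j2
    exact ((((r1.trans r2.symm).trans r3.reachable).trans r4.symm)).trans r5

end part2

/-- For every even `k ≥ 0` and `n = k/2 + 1`, if `m > 6n`, then the stacked
prism `Y_{m,n}` has no balanced separator of size less than `2n`: for every
vertex set `S` with `|S| < 2n`, some connected component of `Y_{m,n} − S` has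
more than `2mn/3` vertices. -/
theorem stackedPrism_no_small_balanced_separator (k n m : ℕ) (hk : Even k)
    (hn : n = k / 2 + 1) (hm : m > 6 * n) :
    ∀ S : Set (Fin m × Fin n), S.ncard < 2 * n →
      ∃ C : ((stackedPrism m n).induce Sᶜ).ConnectedComponent,
        3 * C.supp.ncard > 2 * (m * n) := by
  intro S hS
  have hn1 : 1 ≤ n := by omega
  have hm2 : 2 ≤ m := by omega
  set Clean : Set (Fin m) := {i | ∀ j : Fin n, (i, j) ∉ S} with hCdef
  -- bound on the number of dirty rows
  have hdirty : Cleanᶜ.ncard ≤ S.ncard := by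
    have hex : ∀ i : ↥Cleanᶜ, ∃ j : Fin n, ((i : Fin m), j) ∈ S := by
      intro i
      have h2 := i.2
      simp only [hCdef, Set.mem_compl_iff, Set.mem_setOf_eq, not_forall, not_not] at h2
      exact h2
    choose g hg using hex
    have hinj : Function.Injective (fun i : ↥Cleanᶜ => (⟨((i : Fin m), g i), hg i⟩ : ↥S)) := by
      intro a b hab
      have := congrArg (fun v : ↥S => v.1.1) hab
      exact Subtype.ext this
    have := Nat.card_le_card_of_injective _ hinj
    rwa [Nat.card_coe_set_eq, Nat.card_coe_set_eq] at this
  have hsum : Clean.ncard + Cleanᶜ.ncard = m := by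
    rw [Set.ncard_add_ncard_compl, Nat.card_eq_fintype_card, Fintype.card_fin]
  have hclean_lb : 4 * n + 2 ≤ Clean.ncard := by omega
  -- pick a clean row
  obtain ⟨i0, hi0⟩ : Clean.Nonempty := Set.nonempty_of_ncard_ne_zero (by omega)
  have hi0' : ∀ j : Fin n, (i0, j) ∉ S := hi0
  set j0 : Fin n := ⟨0, by omega⟩ with hj0
  set v0 : ↥Sᶜ := ⟨(i0, j0), hi0' j0⟩ with hv0
  set C := ((stackedPrism m n).induce Sᶜ).connectedComponentMk v0 with hCcomp
  refine ⟨C, ?_⟩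
  set T : Set ↥Sᶜ := {v | v.1.1 ∈ Clean} with hT
  have hTsub : T ⊆ C.supp := by
    rintro ⟨⟨a, b⟩, hmem⟩ hv
    rw [SimpleGraph.ConnectedComponent.mem_supp_iff, hCcomp,
      SimpleGraph.ConnectedComponent.eq]
    exact clean_connect hm2 hS (hv : ∀ j : Fin n, (a, j) ∉ S) hi0' b j0
  have hTcard : T.ncard = Clean.ncard * n := by
    have e : ↥T ≃ ↥Clean × Fin n :=
      { toFun := fun v => (⟨v.1.1.1, v.2⟩, v.1.1.2)
        invFun := fun p => ⟨⟨(p.1.1, p.2), p.1.2 p.2⟩, p.1.2⟩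
        left_inv := by rintro ⟨⟨⟨a, b⟩, h1⟩, h2⟩; rfl
        right_inv := by rintro ⟨⟨a, ha⟩, b⟩; rfl }
    rw [← Nat.card_coe_set_eq, Nat.card_congr e, Nat.card_prod,
      Nat.card_coe_set_eq, Nat.card_eq_fintype_card, Fintype.card_fin]
  have hsupp : T.ncard ≤ C.supp.ncard := Set.ncard_le_ncard hTsub (Set.toFinite _)
  have h3c : 2 * m < 3 * Clean.ncard := by omega
  calc 2 * (m * n) = (2 * m) * n := by ring
    _ < (3 * Clean.ncard) * n := Nat.mul_lt_mul_of_lt_of_le h3c le_rfl (by omega)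
    _ = 3 * (Clean.ncard * n) := by ring
    _ = 3 * T.ncard := by rw [hTcard]
    _ ≤ 3 * C.supp.ncard := by omega
end
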